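/- Let X be a topological space with a Borel measure μ, Y ⊆ X, and A ⊆ Y. Suppose Y contains a countable union of subsets Yᵢ with Aᵢ := Yᵢ ∩ A, satisfying: (a) Yᵢ = closure(Yᵢ) ∩ Y for each i; (b) μ(closure(Y) \ ⋃ᵢ closure(Yᵢ)) = 0; (c) every closure(Yᵢ) contains a set Y°ᵢ open in closure(Y) with μ(Y°ᵢ) = μ(closure Yᵢ). If every Aᵢ is generic in Yᵢ, then A is generic in Y. -/

import Mathlib

open MeasureTheory Set

/-- Proposition on unions of generic pieces: if `Y` contains a countable union of
subsets `Yᵢ` satisfying (a), (b), (c) and each `Aᵢ = Yᵢ ∩ A` is generic in `Yᵢ`,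
then `A` is generic in `Y`. -/
theorem stmt6 {X : Type*} [TopologicalSpace X] [MeasurableSpace X] [BorelSpace X]
    (μ : Measure X) (Y A : Set X) (hAY : A ⊆ Y)
    (Ys : ℕ → Set X) (hYs : ∀ i, Ys i ⊆ Y)
    (ha : ∀ i, Ys i = closure (Ys i) ∩ Y)
    (hb : μ (closure Y \ ⋃ i, closure (Ys i)) = 0)
    (hc : ∀ i, ∃ Yo : Set X, Yo ⊆ closure (Ys i) ∧
      (∃ U : Set X, IsOpen U ∧ Yo = U ∩ closure Y) ∧ μ Yo = μ (closure (Ys i)))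
    (hfin : ∀ i, μ (closure (Ys i)) < ⊤)
    (hgen : ∀ i, 0 < μ (closure (Ys i ∩ A)) ∧ μ (closure (Ys i \ (Ys i ∩ A))) = 0) :
    0 < μ (closure A) ∧ μ (closure (Y \ A)) = 0 := by
  constructor
  · exact lt_of_lt_of_le (hgen 0).1 (measure_mono (closure_mono inter_subset_right))
  · have key : ∀ i, μ (closure (Y \ A) ∩ closure (Ys i)) = 0 := by
      intro i
      obtain ⟨Yo, hYo_sub, ⟨U, hU, hYoU⟩, hYo_meas⟩ := hc i
      have hYo_m : MeasurableSet Yo := by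
        rw [hYoU]; exact hU.measurableSet.inter measurableSet_closure
      have h1 : μ (closure (Ys i) \ Yo) = 0 := by
        rw [measure_diff hYo_sub hYo_m.nullMeasurableSet
          (by rw [hYo_meas]; exact (hfin i).ne), hYo_meas, tsub_self]
      have h2 : closure (Y \ A) ∩ Yo ⊆ closure (Ys i \ (Ys i ∩ A)) := by
        rintro x ⟨hx1, hx2⟩
        rw [hYoU] at hx2
        have hx3 : x ∈ closure (U ∩ (Y \ A)) := hU.inter_closure ⟨hx2.1, hx1⟩
        refine closure_mono ?_ hx3
        rintro y ⟨hyU, hyY, hyA⟩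
        have hyYi : y ∈ Ys i := by
          rw [ha i]
          refine ⟨hYo_sub ?_, hyY⟩
          rw [hYoU]; exact ⟨hyU, subset_closure hyY⟩
        exact ⟨hyYi, fun h => hyA h.2⟩
      have hsplit : closure (Y \ A) ∩ closure (Ys i) ⊆
          (closure (Y \ A) ∩ Yo) ∪ (closure (Ys i) \ Yo) := by
        rintro x ⟨hx1, hx2⟩
        by_cases h : x ∈ Yo
        · exact Or.inl ⟨hx1, h⟩
        · exact Or.inr ⟨hx2, h⟩
      refine le_antisymm ?_ zero_le
      calc μ (closure (Y \ A) ∩ closure (Ys i))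
          ≤ μ ((closure (Y \ A) ∩ Yo) ∪ (closure (Ys i) \ Yo)) := measure_mono hsplit
        _ ≤ μ (closure (Y \ A) ∩ Yo) + μ (closure (Ys i) \ Yo) := measure_union_le _ _
        _ ≤ μ (closure (Ys i \ (Ys i ∩ A))) + 0 :=
            add_le_add (measure_mono h2) h1.le
        _ = 0 := by rw [(hgen i).2, add_zero]
    have hsub : closure (Y \ A) ⊆
        (closure Y \ ⋃ i, closure (Ys i)) ∪ ⋃ i, (closure (Y \ A) ∩ closure (Ys i)) := by
      intro x hx
      have hxY : x ∈ closure Y := closure_mono diff_subset hx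
      by_cases h : x ∈ ⋃ i, closure (Ys i)
      · obtain ⟨i, hi⟩ := mem_iUnion.1 h
        exact Or.inr (mem_iUnion.2 ⟨i, hx, hi⟩)
      · exact Or.inl ⟨hxY, h⟩
    refine le_antisymm ?_ zero_le
    calc μ (closure (Y \ A)) ≤ _ := measure_mono hsub
      _ ≤ μ (closure Y \ ⋃ i, closure (Ys i)) + μ (⋃ i, closure (Y \ A) ∩ closure (Ys i)) :=
          measure_union_le _ _
      _ = 0 := by rw [hb, measure_iUnion_null key, add_zero]
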